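/- Let H be a real Hilbert space, C a nonempty closed convex subset of H, α > 0, and A : C → H an α-inverse strongly monotone mapping. Let {W_n} be a sequence of nonexpansive self-mappings of C, and let z ∈ C be a common fixed point of all W_n that also solves the variational inequality VI(C,A). Let {λ_n} ⊂ [a,b] with 0 < a ≤ b < 2α and {α_n} ⊂ [c,d] with 0 < c ≤ d < 1, and define, starting from x_0 ∈ C: t_n = P_C(x_n − λ_n A x_n), y_n = (1 − α_n)x_n + α_n W_n t_n, and x_{n+1} = W_n P_C(y_n − λ_n A y_n). Then ‖x_n − W_n t_n‖ → 0 and ‖x_n − y_n‖ → 0 as n → ∞. -/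

import Mathlib

open Filter Topology RealInnerProductSpace

private lemma stmt5_norm_sub_smul {H : Type*} [NormedAddCommGroup H] [InnerProductSpace ℝ H]
    (p q : H) (l : ℝ) :
    ‖p - l • q‖ ^ 2 = ‖p‖ ^ 2 - 2 * l * ⟪q, p⟫ + l ^ 2 * ‖q‖ ^ 2 := by
  simp [norm_sub_sq_real, real_inner_smul_right, norm_smul, mul_pow, sq_abs, real_inner_comm p q]
  ring

private lemma stmt5_proj_nonexp {H : Type*} [NormedAddCommGroup H] [InnerProductSpace ℝ H]
    {u v pu pv : H} (h1 : ⟪u - pu, pv - pu⟫ ≤ 0) (h2 : ⟪v - pv, pu - pv⟫ ≤ 0) :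
    ‖pu - pv‖ ≤ ‖u - v‖ := by
  have key : ‖pu - pv‖ ^ 2 ≤ ⟪u - v, pu - pv⟫ := by
    have e : ⟪u - v, pu - pv⟫ - ⟪pu - pv, pu - pv⟫
        = (-⟪u - pu, pv - pu⟫) + (-⟪v - pv, pu - pv⟫) := by
      simp [inner_sub_left, inner_sub_right]; rw [norm_sub_sq_real, real_inner_comm pv pu]; ring
    have := real_inner_self_eq_norm_sq (pu - pv)
    linarith
  have cs := real_inner_le_norm (u - v) (pu - pv)
  nlinarith [norm_nonneg (pu - pv), norm_nonneg (u - v)]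

private lemma stmt5_combo {H : Type*} [NormedAddCommGroup H] [InnerProductSpace ℝ H]
    (p q r : H) (s : ℝ) :
    ‖(1 - s) • p + s • q - r‖ ^ 2
      = (1 - s) * ‖p - r‖ ^ 2 + s * ‖q - r‖ ^ 2 - s * (1 - s) * ‖p - q‖ ^ 2 := by
  have e : (1 - s) • p + s • q - r = (1 - s) • (p - r) + s • (q - r) := by module
  rw [e]
  simp only [norm_add_sq_real, norm_sub_sq_real, norm_smul, real_inner_smul_left,
    real_inner_smul_right, Real.norm_eq_abs, mul_pow, sq_abs, inner_sub_left, inner_sub_right,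
    real_inner_comm q p, real_inner_comm r p, real_inner_comm r q, real_inner_self_eq_norm_sq]
  ring

/-- For the new extragradient iteration, `‖xₙ - Wₙtₙ‖ → 0` and `‖xₙ - yₙ‖ → 0`. -/
theorem stmt_5 {H : Type*} [NormedAddCommGroup H] [InnerProductSpace ℝ H] [CompleteSpace H]
    (C : Set H) (hC : C.Nonempty) (hCclosed : IsClosed C) (hCconvex : Convex ℝ C)
    (α : ℝ) (hα : 0 < α) (A : H → H)
    (hA : ∀ x ∈ C, ∀ y ∈ C, α * ‖A x - A y‖ ^ 2 ≤ ⟪A x - A y, x - y⟫)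
    (P : H → H) (hPmem : ∀ x, P x ∈ C)
    (hPchar : ∀ x, ∀ y ∈ C, ⟪x - P x, y - P x⟫ ≤ 0)
    (W : ℕ → H → H) (hWmap : ∀ n, ∀ x ∈ C, W n x ∈ C)
    (hWne : ∀ n, ∀ x ∈ C, ∀ y ∈ C, ‖W n x - W n y‖ ≤ ‖x - y‖)
    (z : H) (hz : z ∈ C) (hzfix : ∀ n, W n z = z)
    (hzsol : ∀ y ∈ C, 0 ≤ ⟪A z, y - z⟫)
    (a b c d : ℝ) (ha : 0 < a) (hab : a ≤ b) (hb : b < 2 * α)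
    (hc : 0 < c) (hcd : c ≤ d) (hd : d < 1)
    (lam αn : ℕ → ℝ) (hlam : ∀ n, lam n ∈ Set.Icc a b) (hαn : ∀ n, αn n ∈ Set.Icc c d)
    (x y t : ℕ → H) (hx0 : x 0 ∈ C)
    (ht : ∀ n, t n = P (x n - lam n • A (x n)))
    (hy : ∀ n, y n = (1 - αn n) • x n + αn n • W n (t n))
    (hx : ∀ n, x (n + 1) = W n (P (y n - lam n • A (y n)))) :
    Tendsto (fun n => ‖x n - W n (t n)‖) atTop (𝓝 0) ∧
      Tendsto (fun n => ‖x n - y n‖) atTop (𝓝 0) := by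
  -- memberships
  have hxC : ∀ n, x n ∈ C := by
    intro n
    induction n with
    | zero => exact hx0
    | succ n ih => rw [hx n]; exact hWmap n _ (hPmem _)
  have htC : ∀ n, t n ∈ C := fun n => (ht n) ▸ hPmem _
  have hWtC : ∀ n, W n (t n) ∈ C := fun n => hWmap n _ (htC n)
  have hyC : ∀ n, y n ∈ C := by
    intro n
    rw [hy n]
    exact hCconvex (hxC n) (hWtC n) (by linarith [(hαn n).2]) (by linarith [(hαn n).1]) (by ring)
  -- P is nonexpansive
  have hPne : ∀ u v, ‖P u - P v‖ ≤ ‖u - v‖ := fun u v =>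
    stmt5_proj_nonexp (hPchar u (P v) (hPmem v)) (hPchar v (P u) (hPmem u))
  -- z is a fixed point of the projected gradient step
  have hPz : ∀ n, P (z - lam n • A z) = z := by
    intro n
    have h1 := hPchar (z - lam n • A z) z hz
    have h2 := hzsol _ (hPmem (z - lam n • A z))
    set w := P (z - lam n • A z) with hw
    have e : z - lam n • A z - w = (z - w) - lam n • A z := by abel
    rw [e, inner_sub_left, real_inner_smul_left] at h1
    have e2 : ⟪A z, z - w⟫ = -⟪A z, w - z⟫ := by
      rw [← inner_neg_right]; congr 1; abel
    have hl := (hlam n).1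
    have hzw : ⟪z - w, z - w⟫ ≤ 0 := by nlinarith
    have : z - w = 0 := by
      have := real_inner_self_eq_norm_sq (z - w)
      have hn : ‖z - w‖ ^ 2 ≤ 0 := by linarith
      have : ‖z - w‖ = 0 := by nlinarith [norm_nonneg (z - w)]
      exact norm_eq_zero.mp this
    have := sub_eq_zero.mp this
    exact this.symm
  -- the gradient step is nonexpansive towards z
  have hGne : ∀ n, ∀ u ∈ C, ‖(u - lam n • A u) - (z - lam n • A z)‖ ≤ ‖u - z‖ := by
    intro n u hu
    have e : (u - lam n • A u) - (z - lam n • A z) = (u - z) - lam n • (A u - A z) := by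
      rw [smul_sub]; abel
    rw [e]
    have hexp := stmt5_norm_sub_smul (u - z) (A u - A z) (lam n)
    have hmono := hA u hu z hz
    have hl1 := (hlam n).1
    have hl2 := (hlam n).2
    have hcomm : ⟪A u - A z, u - z⟫ = ⟪u - z, A u - A z⟫ := real_inner_comm _ _
    have hsq : ‖(u - z) - lam n • (A u - A z)‖ ^ 2 ≤ ‖u - z‖ ^ 2 := by
      rw [hexp]
      have p1 : 0 ≤ lam n * (⟪A u - A z, u - z⟫ - α * ‖A u - A z‖ ^ 2) :=
        mul_nonneg (by linarith) (by linarith)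
      have p2 : 0 ≤ (lam n * (2 * α - lam n)) * ‖A u - A z‖ ^ 2 :=
        mul_nonneg (mul_nonneg (by linarith) (by linarith)) (sq_nonneg _)
      nlinarith [p1, p2]
    nlinarith [norm_nonneg ((u - z) - lam n • (A u - A z)), norm_nonneg (u - z)]
  -- basic estimates
  have htz : ∀ n, ‖t n - z‖ ≤ ‖x n - z‖ := by
    intro n
    rw [ht n]
    calc ‖P (x n - lam n • A (x n)) - z‖
        = ‖P (x n - lam n • A (x n)) - P (z - lam n • A z)‖ := by rw [hPz n]
      _ ≤ ‖(x n - lam n • A (x n)) - (z - lam n • A z)‖ := hPne _ _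
      _ ≤ ‖x n - z‖ := hGne n _ (hxC n)
  have hWtz : ∀ n, ‖W n (t n) - z‖ ≤ ‖x n - z‖ := by
    intro n
    calc ‖W n (t n) - z‖ = ‖W n (t n) - W n z‖ := by rw [hzfix n]
      _ ≤ ‖t n - z‖ := hWne n _ (htC n) _ hz
      _ ≤ ‖x n - z‖ := htz n
  have hyz : ∀ n, ‖y n - z‖ ^ 2 ≤ ‖x n - z‖ ^ 2 - (c * (1 - d)) * ‖x n - W n (t n)‖ ^ 2 := by
    intro n
    rw [hy n, stmt5_combo]
    have h1 := hWtz n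
    have h2 := (hαn n).1
    have h3 := (hαn n).2
    have hsq1 : ‖W n (t n) - z‖ ^ 2 ≤ ‖x n - z‖ ^ 2 := by
      nlinarith [norm_nonneg (W n (t n) - z), norm_nonneg (x n - z)]
    have p1 : 0 ≤ αn n * (‖x n - z‖ ^ 2 - ‖W n (t n) - z‖ ^ 2) :=
      mul_nonneg (by linarith) (by linarith)
    have p2 : 0 ≤ (αn n * (1 - αn n) - c * (1 - d)) * ‖x n - W n (t n)‖ ^ 2 :=
      mul_nonneg (by nlinarith) (sq_nonneg _)
    nlinarith [p1, p2]
  have hx1z : ∀ n, ‖x (n + 1) - z‖ ≤ ‖y n - z‖ := by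
    intro n
    rw [hx n]
    calc ‖W n (P (y n - lam n • A (y n))) - z‖
        = ‖W n (P (y n - lam n • A (y n))) - W n z‖ := by rw [hzfix n]
      _ ≤ ‖P (y n - lam n • A (y n)) - z‖ := hWne n _ (hPmem _) _ hz
      _ = ‖P (y n - lam n • A (y n)) - P (z - lam n • A z)‖ := by rw [hPz n]
      _ ≤ ‖(y n - lam n • A (y n)) - (z - lam n • A z)‖ := hPne _ _
      _ ≤ ‖y n - z‖ := hGne n _ (hyC n)
  -- key quantitative inequality
  have key : ∀ n, ‖x (n + 1) - z‖ ^ 2 + (c * (1 - d)) * ‖x n - W n (t n)‖ ^ 2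
      ≤ ‖x n - z‖ ^ 2 := by
    intro n
    have h1 := hx1z n
    have h2 := hyz n
    nlinarith [norm_nonneg (x (n + 1) - z), norm_nonneg (y n - z)]
  have hcd0 : 0 < c * (1 - d) := by nlinarith
  set φ : ℕ → ℝ := fun n => ‖x n - z‖ ^ 2 with hφ
  have hanti : Antitone φ := by
    apply antitone_nat_of_succ_le
    intro n
    have hk := key n
    have hp : 0 ≤ (c * (1 - d)) * ‖x n - W n (t n)‖ ^ 2 :=
      mul_nonneg hcd0.le (sq_nonneg _)
    simp only [hφ]
    linarith
  have hbdd : BddBelow (Set.range φ) := ⟨0, by rintro _ ⟨n, rfl⟩; positivity⟩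
  have hconv : Tendsto φ atTop (𝓝 (⨅ n, φ n)) := tendsto_atTop_ciInf hanti hbdd
  have hconv1 : Tendsto (fun n => φ (n + 1)) atTop (𝓝 (⨅ n, φ n)) :=
    hconv.comp (tendsto_add_atTop_nat 1)
  have hdiff : Tendsto (fun n => φ n - φ (n + 1)) atTop (𝓝 0) := by
    simpa using hconv.sub hconv1
  -- squeeze
  have hsq : Tendsto (fun n => ‖x n - W n (t n)‖ ^ 2) atTop (𝓝 0) := by
    have h1 : Tendsto (fun n => (c * (1 - d)) * ‖x n - W n (t n)‖ ^ 2) atTop (𝓝 0) := by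
      apply squeeze_zero (fun n => by positivity) (fun n => ?_) hdiff
      have := key n
      simp only [hφ]
      linarith
    have h2 := h1.const_mul (c * (1 - d))⁻¹
    simp only [mul_zero] at h2
    convert h2 using 2 with n
    rw [← mul_assoc, inv_mul_cancel₀ hcd0.ne', one_mul]
  have hfirst : Tendsto (fun n => ‖x n - W n (t n)‖) atTop (𝓝 0) := by
    have h := (Real.continuous_sqrt.tendsto 0).comp hsq
    simp only [Function.comp_def, Real.sqrt_zero] at h
    convert h using 2 with n
    exact (Real.sqrt_sq (norm_nonneg _)).symm
  refine ⟨hfirst, ?_⟩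
  have e : ∀ n, x n - y n = αn n • (x n - W n (t n)) := by
    intro n; rw [hy n]; module
  have hb2 : Tendsto (fun n => d * ‖x n - W n (t n)‖) atTop (𝓝 0) := by
    simpa using hfirst.const_mul d
  apply squeeze_zero (fun n => norm_nonneg _) (fun n => ?_) hb2
  rw [e n, norm_smul, Real.norm_eq_abs, abs_of_nonneg (lt_of_lt_of_le hc (hαn n).1).le]
  have := (hαn n).2
  nlinarith [norm_nonneg (x n - W n (t n))]
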